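/- arXiv:2603.24717 — 2 statements merged into one kernel-verified Lean document; each statement's English description precedes it below -/
import Mathlib

section
/- Let x, z ∈ F₂ⁿ be nonzero with ⟨x,z⟩ = 1, and let j be an index where both x and z are nonzero. Then conjugation by the product Λ(Z_j, X^{x+e_j}) · Λ(X_j, Z^{z+e_j}) maps the Pauli operator X^x Z^z to X^{e_j} Z^{e_j} (i.e., to a weight-one Pauli Y on qubit j, up to the original phase). -/
open Matrix

/-- The CSS permutation unitary `U_A |r⟩ = |Ar⟩`. -/
noncomputable def Ucss {n : ℕ} (A : Matrix (Fin n) (Fin n) (ZMod 2)) :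
    Matrix (Fin n → ZMod 2) (Fin n → ZMod 2) ℂ :=
  fun s r => if s = A.mulVec r then 1 else 0

/-- Inner product of bit vectors over `F₂`. -/
def ipF2 {n : ℕ} (x z : Fin n → ZMod 2) : ZMod 2 := ∑ i, x i * z i

/-- `X^x`: tensor product of Pauli `X`s indicated by the bits of `x`. -/
noncomputable def Xpow {n : ℕ} (x : Fin n → ZMod 2) :
    Matrix (Fin n → ZMod 2) (Fin n → ZMod 2) ℂ :=
  fun s r => if s = r + x then 1 else 0

/-- `Z^z`: tensor product of Pauli `Z`s indicated by the bits of `z`. -/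
noncomputable def Zpow {n : ℕ} (z : Fin n → ZMod 2) :
    Matrix (Fin n → ZMod 2) (Fin n → ZMod 2) ℂ :=
  Matrix.diagonal fun r => (-1 : ℂ) ^ (ipF2 z r).val

/-- Controlled-Pauli operator `Λ(P₁,P₂) = (I+P₁)/2 + ((I−P₁)/2)·P₂`. -/
noncomputable def ctrlPauli {n : ℕ}
    (P₁ P₂ : Matrix (Fin n → ZMod 2) (Fin n → ZMod 2) ℂ) :
    Matrix (Fin n → ZMod 2) (Fin n → ZMod 2) ℂ :=
  ((1 : ℂ) / 2) • ((1 : Matrix (Fin n → ZMod 2) (Fin n → ZMod 2) ℂ) + P₁) +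
    ((1 : ℂ) / 2) •
      (((1 : Matrix (Fin n → ZMod 2) (Fin n → ZMod 2) ℂ) - P₁) * P₂)

noncomputable def Pmat {n : ℕ} (f : (Fin n → ZMod 2) → (Fin n → ZMod 2)) :
    Matrix (Fin n → ZMod 2) (Fin n → ZMod 2) ℂ :=
  fun s r => if s = f r then 1 else 0

lemma ipF2_single_left {n : ℕ} (j : Fin n) (v : Fin n → ZMod 2) :
    ipF2 (Pi.single j 1) v = v j := by
  simp [ipF2, Pi.single_apply]

lemma mul_Xpow_apply {n : ℕ} (M : Matrix (Fin n → ZMod 2) (Fin n → ZMod 2) ℂ)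
    (a : Fin n → ZMod 2) (s r : Fin n → ZMod 2) :
    (M * Xpow a) s r = M s (r + a) := by
  simp [Xpow, Matrix.mul_apply]

lemma mul_Pmat_apply {n : ℕ} (M : Matrix (Fin n → ZMod 2) (Fin n → ZMod 2) ℂ)
    (f : (Fin n → ZMod 2) → (Fin n → ZMod 2)) (s r : Fin n → ZMod 2) :
    (M * Pmat f) s r = M s (f r) := by
  simp [Pmat, Matrix.mul_apply]

lemma XZ_apply {n : ℕ} (x z : Fin n → ZMod 2) (s r : Fin n → ZMod 2) :
    (Xpow x * Zpow z) s r = if s = r + x then (-1 : ℂ) ^ (ipF2 z r).val else 0 := by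
  simp [Xpow, Zpow, Matrix.mul_diagonal, ite_mul]

lemma Pmat_mul_XZ_apply {n : ℕ} (f : (Fin n → ZMod 2) → (Fin n → ZMod 2))
    (x z : Fin n → ZMod 2) (s r : Fin n → ZMod 2) :
    (Pmat f * (Xpow x * Zpow z)) s r
      = if s = f (r + x) then (-1 : ℂ) ^ (ipF2 z r).val else 0 := by
  conv_lhs => rw [Matrix.mul_apply]
  simp only [XZ_apply, Pmat]
  simp [mul_ite, ite_mul, Finset.sum_ite_eq]

lemma Pmat_mul_Pmat {n : ℕ} (f g : (Fin n → ZMod 2) → (Fin n → ZMod 2)) :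
    Pmat f * Pmat g = Pmat (f ∘ g) := by
  ext s r
  simp only [Matrix.mul_apply, Pmat]
  simp [mul_ite, ite_mul, Finset.sum_ite_eq, Function.comp]

lemma Pmat_conjT {n : ℕ} (f g : (Fin n → ZMod 2) → (Fin n → ZMod 2))
    (h1 : ∀ r, f (g r) = r) (h2 : ∀ r, g (f r) = r) :
    (Pmat f)ᴴ = Pmat g := by
  ext s r
  simp only [Matrix.conjTranspose_apply, Pmat]
  have hiff : (r = f s) ↔ (s = g r) := by
    constructor
    · rintro rfl; rw [h2]
    · rintro rfl; rw [h1]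
  simp only [hiff]
  split_ifs <;> simp

lemma ctrl_Z_X {n : ℕ} (j : Fin n) (a : Fin n → ZMod 2) (ha : a j = 0) :
    ctrlPauli (Zpow (Pi.single j 1)) (Xpow a) = Pmat (fun r => r + r j • a) := by
  ext s r
  rw [ctrlPauli]
  have h01 : ∀ c : ZMod 2, c = 0 ∨ c = 1 := by decide
  simp only [Matrix.add_apply, Matrix.smul_apply, smul_eq_mul, mul_Xpow_apply,
    Matrix.sub_apply, Matrix.one_apply, Zpow, Matrix.diagonal_apply, ipF2_single_left, Pmat]
  rcases h01 (r j) with hr | hr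
  · simp only [hr, zero_smul, add_zero]
    split_ifs with h1 h2 h2
    · have hs : s j = 0 := by rw [h1]; exact hr
      simp only [hs, ZMod.val_zero, pow_zero]; norm_num
    · have hs : s j = 0 := by rw [h1]; exact hr
      simp only [hs, ZMod.val_zero, pow_zero]; norm_num
    · have hs : s j = 0 := by rw [h2]; simp [hr, ha]
      simp only [hs, ZMod.val_zero, pow_zero]; norm_num
    · norm_num
  · simp only [hr, one_smul]
    split_ifs with h1 h2 h2
    · have hs : s j = 1 := by rw [h1]; exact hr
      simp only [hs, ZMod.val_one, pow_one]; norm_num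
    · have hs : s j = 1 := by rw [h1]; exact hr
      simp only [hs, ZMod.val_one, pow_one]; norm_num
    · have hs : s j = 1 := by rw [h2]; simp [hr, ha]
      simp only [hs, ZMod.val_one, pow_one]; norm_num
    · norm_num

lemma ctrl_X_Z {n : ℕ} (j : Fin n) (b : Fin n → ZMod 2) :
    ctrlPauli (Xpow (Pi.single j 1)) (Zpow b)
      = Pmat (fun r => r + ipF2 b r • (Pi.single j 1 : Fin n → ZMod 2)) := by
  ext s r
  rw [ctrlPauli]
  have h01 : ∀ c : ZMod 2, c = 0 ∨ c = 1 := by decide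
  simp only [Matrix.add_apply, Matrix.smul_apply, smul_eq_mul,
    Matrix.sub_apply, Matrix.one_apply, Zpow, Matrix.mul_diagonal, Xpow, Pmat]
  rcases h01 (ipF2 b r) with hb | hb
  · simp only [hb, zero_smul, add_zero, ZMod.val_zero, pow_zero, mul_one]
    ring
  · simp only [hb, one_smul, ZMod.val_one, pow_one]
    ring

lemma ipF2_add_left {n : ℕ} (u v z : Fin n → ZMod 2) :
    ipF2 (u + v) z = ipF2 u z + ipF2 v z := by
  simp [ipF2, add_mul, Finset.sum_add_distrib]

lemma ipF2_add_right {n : ℕ} (z u v : Fin n → ZMod 2) :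
    ipF2 z (u + v) = ipF2 z u + ipF2 z v := by
  simp [ipF2, mul_add, Finset.sum_add_distrib]

lemma ipF2_smul_right {n : ℕ} (z : Fin n → ZMod 2) (c : ZMod 2) (v : Fin n → ZMod 2) :
    ipF2 z (c • v) = c * ipF2 z v := by
  simp [ipF2, Finset.mul_sum, smul_eq_mul]
  exact Finset.sum_congr rfl fun i _ => by ring

lemma ipF2_single_right {n : ℕ} (j : Fin n) (v : Fin n → ZMod 2) :
    ipF2 v (Pi.single j 1) = v j := by
  simp [ipF2, Pi.single_apply]

lemma ipF2_comm {n : ℕ} (u v : Fin n → ZMod 2) : ipF2 u v = ipF2 v u := by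
  simp [ipF2, mul_comm]

lemma conj_eq {n : ℕ} (F G : (Fin n → ZMod 2) → (Fin n → ZMod 2)) (x z w : Fin n → ZMod 2)
    (hFG : ∀ r, F (G r) = r) (hGF : ∀ r, G (F r) = r)
    (hK1 : ∀ r, F (G r + x) = r + w)
    (hK2 : ∀ r, ipF2 z (G r) = ipF2 w r) :
    Pmat F * (Xpow x * Zpow z) * (Pmat F)ᴴ = Xpow w * Zpow w := by
  rw [Pmat_conjT F G hFG hGF]
  ext s r
  rw [mul_Pmat_apply, Pmat_mul_XZ_apply, XZ_apply, hK1, hK2]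

/-- CSS-Orbit, case `⟨x,z⟩ = 1`: conjugation by
`Λ(Z_j, X^{x+e_j}) Λ(X_j, Z^{z+e_j})` maps `X^x Z^z` to `X^{e_j} Z^{e_j}`. -/
theorem cssOrbit_anticomm_case {n : ℕ} (x z : Fin n → ZMod 2) (j : Fin n)
    (hx : x ≠ 0) (hz : z ≠ 0) (hxz : ipF2 x z = 1)
    (hxj : x j = 1) (hzj : z j = 1) :
    let ej : Fin n → ZMod 2 := Pi.single j 1
    let C := ctrlPauli (Zpow ej) (Xpow (x + ej)) * ctrlPauli (Xpow ej) (Zpow (z + ej))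
    C * (Xpow x * Zpow z) * Cᴴ = Xpow ej * Zpow ej := by
  intro ej C
  show ctrlPauli (Zpow (Pi.single j 1)) (Xpow (x + Pi.single j 1)) *
      ctrlPauli (Xpow (Pi.single j 1)) (Zpow (z + Pi.single j 1)) *
      (Xpow x * Zpow z) *
      (ctrlPauli (Zpow (Pi.single j 1)) (Xpow (x + Pi.single j 1)) *
        ctrlPauli (Xpow (Pi.single j 1)) (Zpow (z + Pi.single j 1)))ᴴ
    = Xpow (Pi.single j 1) * Zpow (Pi.single j 1)
  have h2c : ∀ c : ZMod 2, c + c = 0 := by decide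
  have h2v : ∀ v : Fin n → ZMod 2, v + v = 0 := fun v => funext fun i => h2c (v i)
  have haj : (x + Pi.single j 1 : Fin n → ZMod 2) j = 0 := by
    show x j + _ = 0
    rw [hxj, Pi.single_eq_same]
    exact h2c 1
  have hbj : (z + Pi.single j 1 : Fin n → ZMod 2) j = 0 := by
    show z j + _ = 0
    rw [hzj, Pi.single_eq_same]
    exact h2c 1
  rw [ctrl_Z_X j (x + Pi.single j 1) haj, ctrl_X_Z j (z + Pi.single j 1), Pmat_mul_Pmat]
  set e : Fin n → ZMod 2 := Pi.single j 1 with he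
  set a : Fin n → ZMod 2 := x + e with ha
  set b : Fin n → ZMod 2 := z + e with hb
  -- basic scalar facts
  have hej : e j = 1 := by rw [he]; exact Pi.single_eq_same j 1
  have hzx : ipF2 z x = 1 := by rw [ipF2_comm]; exact hxz
  have hze : ipF2 z e = 1 := by rw [he, ipF2_single_right, hzj]
  have hza : ipF2 z a = 0 := by rw [ha, ipF2_add_right, hzx, hze]; exact h2c 1
  have hbv : ∀ v, ipF2 b v = ipF2 z v + v j := fun v => by
    rw [hb, ipF2_add_left, he, ipF2_single_left]
  have hbx : ipF2 b x = 0 := by rw [hbv, hzx, hxj]; exact h2c 1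
  have hba : ipF2 b a = 0 := by rw [hbv, hza, haj, add_zero]
  have hxa : e = x + a := by rw [ha, ← add_assoc, h2v, zero_add]
  -- cancellation lemma
  have hcan : ∀ (u w : Fin n → ZMod 2) (c : ZMod 2), (u + c • w) + c • w = u := by
    intro u w c
    rw [add_assoc, ← add_smul, h2c, zero_smul, add_zero]
  -- coordinate and inner-product computations
  have hFj : ∀ (u : Fin n → ZMod 2) (c : ZMod 2), (u + c • a) j = u j := by
    intro u c
    show u j + c • a j = u j
    rw [haj, smul_eq_mul, mul_zero, add_zero]
  have hbF : ∀ (u : Fin n → ZMod 2) (c : ZMod 2), ipF2 b (u + c • e) = ipF2 b u := by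
    intro u c
    rw [ipF2_add_right, ipF2_smul_right, hbv e, hze, hej, h2c, mul_zero, add_zero]
  -- involutivity of the two building blocks
  have hs2 : ∀ u : Fin n → ZMod 2,
      (u + ipF2 b u • e) + ipF2 b (u + ipF2 b u • e) • e = u := by
    intro u
    rw [hbF]
    exact hcan u e _
  have hs1 : ∀ u : Fin n → ZMod 2,
      (u + u j • a) + ((u + u j • a) j) • a = u := by
    intro u
    rw [hFj]
    exact hcan u a _
  -- behavior under adding x
  have hx2 : ∀ u : Fin n → ZMod 2,
      (u + x) + ipF2 b (u + x) • e = (u + ipF2 b u • e) + x := by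
    intro u
    rw [ipF2_add_right, hbx, add_zero]
    abel
  have hx1 : ∀ u : Fin n → ZMod 2,
      (u + x) + ((u + x) j) • a = (u + u j • a) + e := by
    intro u
    have h1 : (u + x) j = u j + 1 := by
      show u j + x j = u j + 1
      rw [hxj]
    rw [h1, add_smul, one_smul, hxa]
    abel
  -- the four hypotheses of conj_eq
  have hFG : ∀ r, ((fun r => r + r j • a) ∘ fun r => r + ipF2 b r • e)
      (((fun r => r + ipF2 b r • e) ∘ fun r => r + r j • a) r) = r := by
    intro r
    simp only [Function.comp_apply]
    rw [hs2, hs1]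
  have hGF : ∀ r, ((fun r => r + ipF2 b r • e) ∘ fun r => r + r j • a)
      (((fun r => r + r j • a) ∘ fun r => r + ipF2 b r • e) r) = r := by
    intro r
    simp only [Function.comp_apply]
    rw [hs1, hs2]
  have hK1 : ∀ r, ((fun r => r + r j • a) ∘ fun r => r + ipF2 b r • e)
      ((((fun r => r + ipF2 b r • e) ∘ fun r => r + r j • a) r) + x) = r + e := by
    intro r
    simp only [Function.comp_apply]
    rw [hx2, hs2, hx1, hs1]
  have hK2 : ∀ r, ipF2 z (((fun r => r + ipF2 b r • e) ∘ fun r => r + r j • a) r)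
      = ipF2 e r := by
    intro r
    simp only [Function.comp_apply]
    rw [ipF2_add_right, ipF2_smul_right, hze, mul_one, ipF2_add_right, ipF2_smul_right,
      hza, mul_zero, add_zero, ipF2_add_right, ipF2_smul_right, hba, mul_zero, add_zero,
      hbv, he, ipF2_single_left, ← add_assoc, h2c, zero_add]
  exact conj_eq _ ((fun r => r + ipF2 b r • e) ∘ fun r => r + r j • a) x z e hFG hGF hK1 hK2
end

section
/- Every Pauli operator on n qubits can be mapped by conjugation with a product of at most two CSS controlled-Pauli operators Λ(X^a, Z^b) (with ⟨a,b⟩ = 0) to a Pauli operator supported on at most two qubits, of the form ±i^l times one of I, X_j, Y_j, Z_j, or Y_j Y_k. -/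
open Matrix

namespace CssAux
variable {n : ℕ}

lemma zmod2_add_self (c : ZMod 2) : c + c = 0 := by revert c; decide

lemma ipF2_comm (x z : Fin n → ZMod 2) : ipF2 x z = ipF2 z x := by
  simp [ipF2, mul_comm]

lemma ipF2_add_right (w x y : Fin n → ZMod 2) :
    ipF2 w (x + y) = ipF2 w x + ipF2 w y := by
  simp [ipF2, mul_add, Finset.sum_add_distrib]

lemma ipF2_smul_right (w : Fin n → ZMod 2) (c : ZMod 2) (x : Fin n → ZMod 2) :
    ipF2 w (c • x) = c * ipF2 w x := by
  simp [ipF2, Finset.mul_sum, mul_left_comm]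

lemma ipF2_add_left (x y w : Fin n → ZMod 2) :
    ipF2 (x + y) w = ipF2 x w + ipF2 y w := by
  rw [ipF2_comm, ipF2_add_right, ipF2_comm w x, ipF2_comm w y]

lemma ipF2_smul_left (c : ZMod 2) (x w : Fin n → ZMod 2) :
    ipF2 (c • x) w = c * ipF2 x w := by
  rw [ipF2_comm, ipF2_smul_right, ipF2_comm]

lemma zmod2_ne_zero {c : ZMod 2} (h : c ≠ 0) : c = 1 := by revert c; decide

lemma vadd_self (v : Fin n → ZMod 2) : v + v = 0 := by
  funext i; simp [zmod2_add_self]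

lemma vadd_add_cancel (v w : Fin n → ZMod 2) : v + (v + w) = w := by
  rw [← add_assoc, vadd_self, zero_add]

lemma ipF2_zero_right (w : Fin n → ZMod 2) : ipF2 w 0 = 0 := by simp [ipF2]
lemma ipF2_zero_left (w : Fin n → ZMod 2) : ipF2 0 w = 0 := by simp [ipF2]

/-- basis vector -/
def eb (j : Fin n) : Fin n → ZMod 2 := fun i => if i = j then 1 else 0

lemma ipF2_eb_left (j : Fin n) (v : Fin n → ZMod 2) : ipF2 (eb j) v = v j := by
  simp [ipF2, eb, ite_mul]

lemma ipF2_eb_right (v : Fin n → ZMod 2) (j : Fin n) : ipF2 v (eb j) = v j := by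
  rw [ipF2_comm, ipF2_eb_left]

/-- The permutation matrix of `r ↦ r + ⟨b,r⟩ a`. -/
noncomputable def Cmat (a b : Fin n → ZMod 2) :
    Matrix (Fin n → ZMod 2) (Fin n → ZMod 2) ℂ :=
  fun s r => if s = r + ipF2 b r • a then 1 else 0

lemma zmod2_cases (c : ZMod 2) : c = 0 ∨ c = 1 := by revert c; decide

lemma ctrl_eq (a b : Fin n → ZMod 2) :
    ctrlPauli (Xpow a) (Zpow b) = Cmat a b := by
  ext s r
  simp only [ctrlPauli, Cmat, Matrix.add_apply, Matrix.smul_apply, Zpow,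
    Matrix.mul_diagonal, Matrix.sub_apply, Matrix.one_apply, Xpow, smul_eq_mul]
  rcases zmod2_cases (ipF2 b r) with h | h <;> rw [h]
  · simp only [ZMod.val_zero, pow_zero, zero_smul, add_zero]
    split_ifs <;> ring
  · simp only [ZMod.val_one, pow_one, one_smul]
    split_ifs <;> ring

lemma T_invol {a b : Fin n → ZMod 2} (hip : ipF2 a b = 0) (r : Fin n → ZMod 2) :
    (r + ipF2 b r • a) + ipF2 b (r + ipF2 b r • a) • a = r := by
  have hba : ipF2 b a = 0 := by rw [ipF2_comm]; exact hip
  rw [ipF2_add_right, ipF2_smul_right, hba, mul_zero, add_zero,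
    add_assoc, ← add_smul, zmod2_add_self, zero_smul, add_zero]

lemma T_iff {a b : Fin n → ZMod 2} (hip : ipF2 a b = 0) (s t : Fin n → ZMod 2) :
    s = t + ipF2 b t • a ↔ t = s + ipF2 b s • a := by
  constructor <;> rintro rfl <;> exact (T_invol hip _).symm

lemma Cmat_conjT {a b : Fin n → ZMod 2} (hip : ipF2 a b = 0) :
    (Cmat a b)ᴴ = Cmat a b := by
  ext s r
  rw [Matrix.conjTranspose_apply, Cmat, Cmat,
    if_congr (T_iff hip r s) rfl rfl]
  split_ifs <;> simp

lemma mul_Cmat_apply (M : Matrix (Fin n → ZMod 2) (Fin n → ZMod 2) ℂ)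
    (a b : Fin n → ZMod 2) (s r : Fin n → ZMod 2) :
    (M * Cmat a b) s r = M s (r + ipF2 b r • a) := by
  rw [Matrix.mul_apply]
  simp only [Cmat, mul_ite, mul_one, mul_zero]
  rw [Finset.sum_ite_eq' Finset.univ (r + ipF2 b r • a) (fun t => M s t)]
  simp

lemma Cmat_mul_apply {a b : Fin n → ZMod 2} (hip : ipF2 a b = 0)
    (M : Matrix (Fin n → ZMod 2) (Fin n → ZMod 2) ℂ) (s r : Fin n → ZMod 2) :
    (Cmat a b * M) s r = M (s + ipF2 b s • a) r := by
  rw [Matrix.mul_apply]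
  simp only [Cmat, ite_mul, one_mul, zero_mul]
  have : ∀ t : Fin n → ZMod 2,
      (if s = t + ipF2 b t • a then M t r else 0)
        = (if t = s + ipF2 b s • a then M t r else 0) := by
    intro t; exact if_congr (T_iff hip s t) rfl rfl
  rw [Finset.sum_congr rfl (fun t _ => this t),
    Finset.sum_ite_eq' Finset.univ (s + ipF2 b s • a) (fun t => M t r)]
  simp

lemma XZ_apply (x z : Fin n → ZMod 2) (s r : Fin n → ZMod 2) :
    (Xpow x * Zpow z) s r
      = (if s = r + x then 1 else 0) * (-1 : ℂ) ^ (ipF2 z r).val := by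
  simp [Xpow, Zpow, Matrix.mul_diagonal]

lemma conj_step {a b : Fin n → ZMod 2} (hip : ipF2 a b = 0)
    (x z : Fin n → ZMod 2) :
    Cmat a b * (Xpow x * Zpow z) * (Cmat a b)ᴴ
      = Xpow (x + ipF2 b x • a) * Zpow (z + ipF2 a z • b) := by
  have hba : ipF2 b a = 0 := by rw [ipF2_comm]; exact hip
  rw [Cmat_conjT hip]
  ext s r
  rw [mul_Cmat_apply, Cmat_mul_apply hip, XZ_apply, XZ_apply]
  have hphase : ipF2 z (r + ipF2 b r • a) = ipF2 (z + ipF2 a z • b) r := by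
    rw [ipF2_add_right, ipF2_smul_right, ipF2_add_left, ipF2_smul_left,
      ipF2_comm z a]
    ring
  have hT : (r + ipF2 b r • a + x) + ipF2 b (r + ipF2 b r • a + x) • a
      = r + (x + ipF2 b x • a) := by
    rw [ipF2_add_right, ipF2_add_right, ipF2_smul_right, hba, mul_zero,
      add_zero, add_smul]
    calc r + ipF2 b r • a + x + (ipF2 b r • a + ipF2 b x • a)
        = (r + (x + ipF2 b x • a)) + (ipF2 b r • a + ipF2 b r • a) := by abel
      _ = r + (x + ipF2 b x • a) := by
          rw [← add_smul, zmod2_add_self, zero_smul, add_zero]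
  have hcond : (s + ipF2 b s • a = (r + ipF2 b r • a) + x)
      ↔ (s = r + (x + ipF2 b x • a)) := by
    rw [eq_comm, T_iff hip, hT]
  rw [hphase, if_congr hcond rfl rfl]

lemma double_conj (a₁ b₁ a₂ b₂ : Fin n → ZMod 2) (h1 : ipF2 a₁ b₁ = 0)
    (h2 : ipF2 a₂ b₂ = 0) (l : ℕ) (x z : Fin n → ZMod 2) :
    (ctrlPauli (Xpow a₁) (Zpow b₁) * ctrlPauli (Xpow a₂) (Zpow b₂)) *
        ((Complex.I ^ l) • (Xpow x * Zpow z)) *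
        (ctrlPauli (Xpow a₁) (Zpow b₁) * ctrlPauli (Xpow a₂) (Zpow b₂))ᴴ =
      (Complex.I ^ l) •
        (Xpow ((x + ipF2 b₂ x • a₂) + ipF2 b₁ (x + ipF2 b₂ x • a₂) • a₁) *
         Zpow ((z + ipF2 a₂ z • b₂) + ipF2 a₁ (z + ipF2 a₂ z • b₂) • b₁)) := by
  rw [ctrl_eq, ctrl_eq, Matrix.conjTranspose_mul, mul_smul_comm, smul_mul_assoc]
  congr 1
  have hassoc : Cmat a₁ b₁ * Cmat a₂ b₂ * (Xpow x * Zpow z) *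
      ((Cmat a₂ b₂)ᴴ * (Cmat a₁ b₁)ᴴ)
      = Cmat a₁ b₁ * (Cmat a₂ b₂ * (Xpow x * Zpow z) * (Cmat a₂ b₂)ᴴ) *
        (Cmat a₁ b₁)ᴴ := by
    simp only [mul_assoc]
  rw [hassoc, conj_step h2, conj_step h1]

lemma eb_self (j : Fin n) : eb j j = 1 := by simp [eb]
lemma eb_ne {i j : Fin n} (h : i ≠ j) : eb j i = 0 := by simp [eb, h]

lemma card_le_two (x' z' : Fin n → ZMod 2) (j k : Fin n)
    (h : ∀ i, i ≠ j → i ≠ k → x' i = 0 ∧ z' i = 0) :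
    (Finset.univ.filter fun i => x' i ≠ 0 ∨ z' i ≠ 0).card ≤ 2 := by
  have hsub : (Finset.univ.filter fun i => x' i ≠ 0 ∨ z' i ≠ 0)
      ⊆ ({j, k} : Finset (Fin n)) := by
    intro i hi
    rw [Finset.mem_filter] at hi
    by_contra hc
    simp only [Finset.mem_insert, Finset.mem_singleton, not_or] at hc
    obtain ⟨hx0, hz0⟩ := h i hc.1 hc.2
    rcases hi.2 with h' | h'
    · exact h' hx0
    · exact h' hz0
  exact (Finset.card_le_card hsub).trans
    ((Finset.card_insert_le _ _).trans (by simp))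

end CssAux
open CssAux

/-- Correctness of the CSS-Orbit algorithm: every Pauli operator
`i^l X^x Z^z` can be mapped by conjugation with a product of at most two CSS
controlled-Pauli operators `Λ(X^a, Z^b)` (with `⟨a,b⟩ = 0`) to a Pauli
operator `i^m X^{x'} Z^{z'}` supported on at most two qubits. -/
theorem cssOrbit_correct {n : ℕ} (l : ℕ) (x z : Fin n → ZMod 2) :
    ∃ (a₁ b₁ a₂ b₂ : Fin n → ZMod 2) (m : ℕ) (x' z' : Fin n → ZMod 2),
      ipF2 a₁ b₁ = 0 ∧ ipF2 a₂ b₂ = 0 ∧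
      (Finset.univ.filter fun i => x' i ≠ 0 ∨ z' i ≠ 0).card ≤ 2 ∧
      (ctrlPauli (Xpow a₁) (Zpow b₁) * ctrlPauli (Xpow a₂) (Zpow b₂)) *
          ((Complex.I ^ l) • (Xpow x * Zpow z)) *
          (ctrlPauli (Xpow a₁) (Zpow b₁) * ctrlPauli (Xpow a₂) (Zpow b₂))ᴴ =
        (Complex.I ^ m) • (Xpow x' * Zpow z') := by
  classical
  by_cases hx : x = 0
  · subst hx
    by_cases hz : z = 0
    · -- identity Pauli
      subst hz
      refine ⟨0, 0, 0, 0, l, 0, 0, ipF2_zero_left 0, ipF2_zero_left 0, by simp, ?_⟩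
      rw [double_conj 0 0 0 0 (ipF2_zero_left 0) (ipF2_zero_left 0) l 0 0]
      simp
    · -- pure Z
      obtain ⟨j, hj0⟩ := Function.ne_iff.mp hz
      have hj : z j = 1 := zmod2_ne_zero (by simpa using hj0)
      have H2 : ipF2 (eb j) (z + eb j) = 0 := by
        rw [ipF2_eb_left, Pi.add_apply, hj, eb_self]; decide
      refine ⟨0, 0, eb j, z + eb j, l, 0, eb j, ipF2_zero_left 0, H2,
        card_le_two _ _ j j (fun i hij _ => ⟨rfl, eb_ne hij⟩), ?_⟩
      rw [double_conj 0 0 (eb j) (z + eb j) (ipF2_zero_left 0) H2 l 0 z]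
      have hxv : ((0 : Fin n → ZMod 2) + ipF2 (z + eb j) 0 • eb j)
          + ipF2 0 ((0 : Fin n → ZMod 2) + ipF2 (z + eb j) 0 • eb j) • 0
          = (0 : Fin n → ZMod 2) := by
        rw [ipF2_zero_right, zero_smul, add_zero, smul_zero, add_zero]
      have hzv : (z + ipF2 (eb j) z • (z + eb j))
          + ipF2 0 (z + ipF2 (eb j) z • (z + eb j)) • 0 = eb j := by
        rw [smul_zero, add_zero, ipF2_eb_left, hj, one_smul, vadd_add_cancel]
      rw [hxv, hzv]
  · -- x ≠ 0
    obtain ⟨j, hj0⟩ := Function.ne_iff.mp hx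
    have hj : x j = 1 := zmod2_ne_zero (by simpa using hj0)
    have H2 : ipF2 (x + eb j) (eb j) = 0 := by
      rw [ipF2_eb_right, Pi.add_apply, hj, eb_self]; decide
    have hX1 : x + ipF2 (eb j) x • (x + eb j) = eb j := by
      rw [ipF2_eb_left, hj, one_smul, vadd_add_cancel]
    set z₁ : Fin n → ZMod 2 := z + ipF2 (x + eb j) z • eb j with hz₁
    by_cases h0 : z₁ = 0
    · -- pure X_j
      refine ⟨0, 0, x + eb j, eb j, l, eb j, 0, ipF2_zero_left 0, H2,
        card_le_two _ _ j j (fun i hij _ => ⟨eb_ne hij, rfl⟩), ?_⟩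
      rw [double_conj 0 0 (x + eb j) (eb j) (ipF2_zero_left 0) H2 l x z]
      rw [hX1, smul_zero, add_zero, smul_zero, add_zero, ← hz₁, h0]
    · by_cases h1j : z₁ j = 1
      · -- Y_j
        have hbj : (z₁ + eb j) j = 0 := by
          rw [Pi.add_apply, h1j, eb_self]; decide
        have H1 : ipF2 (eb j) (z₁ + eb j) = 0 := by rw [ipF2_eb_left, hbj]
        refine ⟨eb j, z₁ + eb j, x + eb j, eb j, l, eb j, eb j, H1, H2,
          card_le_two _ _ j j (fun i hij _ => ⟨eb_ne hij, eb_ne hij⟩), ?_⟩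
        rw [double_conj (eb j) (z₁ + eb j) (x + eb j) (eb j) H1 H2 l x z]
        rw [hX1, ← hz₁]
        have hxv : eb j + ipF2 (z₁ + eb j) (eb j) • eb j = eb j := by
          rw [ipF2_eb_right, hbj, zero_smul, add_zero]
        have hzv : z₁ + ipF2 (eb j) z₁ • (z₁ + eb j) = eb j := by
          rw [ipF2_eb_left, h1j, one_smul, vadd_add_cancel]
        rw [hxv, hzv]
      · -- z₁ j = 0, z₁ ≠ 0 : Y_j Y_k shape (X_j, Z_k)
        have h0j : z₁ j = 0 := by
          rcases zmod2_cases (z₁ j) with h | h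
          · exact h
          · exact absurd h h1j
        obtain ⟨k, hk0⟩ := Function.ne_iff.mp h0
        have hk : z₁ k = 1 := zmod2_ne_zero (by simpa using hk0)
        have hjk : j ≠ k := by
          rintro rfl; rw [h0j] at hk; exact absurd hk (by decide)
        have hbk : (z₁ + eb k) k = 0 := by
          rw [Pi.add_apply, hk, eb_self]; decide
        have H1 : ipF2 (eb k) (z₁ + eb k) = 0 := by rw [ipF2_eb_left, hbk]
        refine ⟨eb k, z₁ + eb k, x + eb j, eb j, l, eb j, eb k, H1, H2,
          card_le_two _ _ j k (fun i hij hik => ⟨eb_ne hij, eb_ne hik⟩), ?_⟩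
        rw [double_conj (eb k) (z₁ + eb k) (x + eb j) (eb j) H1 H2 l x z]
        rw [hX1, ← hz₁]
        have hbj : (z₁ + eb k) j = 0 := by
          rw [Pi.add_apply, h0j, eb_ne hjk, add_zero]
        have hxv : eb j + ipF2 (z₁ + eb k) (eb j) • eb k = eb j := by
          rw [ipF2_eb_right, hbj, zero_smul, add_zero]
        have hzv : z₁ + ipF2 (eb k) z₁ • (z₁ + eb k) = eb k := by
          rw [ipF2_eb_left, hk, one_smul, vadd_add_cancel]
        rw [hxv, hzv]
end
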